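/- Let O be the Hurwitz order in (−1,−1/Q). The quotient group O^×/{±1} has order 12, and the reduction map O^×/{±1} → (O/2O)^× is a bijection onto the image of (O/2O)^× (in particular (O/2O)^× has order 12 and every unit class mod 2O contains a unit of O, uniquely up to sign). -/

import Mathlib

set_option synthInstance.maxSize 2000
set_option synthInstance.maxHeartbeats 1000000
set_option maxHeartbeats 1000000

open scoped Quaternion

/-- The element `a·1 + b·i + c·j + d·ω` of the rational quaternions, where
`ω = (1+i+j+k)/2` is the Hurwitz unit. -/
noncomputable def hurElt (a b c d : ℤ) : ℍ[ℚ] :=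
  ⟨(a : ℚ) + (d : ℚ)/2, (b : ℚ) + (d : ℚ)/2, (c : ℚ) + (d : ℚ)/2, (d : ℚ)/2⟩

/-- The Hurwitz order: the `ℤ`-span of `1, i, j, (1+i+j+k)/2` in `(−1,−1/ℚ)`. -/
def Hur : Set ℍ[ℚ] := {x | ∃ a b c d : ℤ, x = hurElt a b c d}

/-- A unit of the Hurwitz order. -/
def hurUnit (x : ℍ[ℚ]) : Prop := x ∈ Hur ∧ ∃ y ∈ Hur, x * y = 1 ∧ y * x = 1

/-- `x` is invertible modulo `2O` in the Hurwitz order. -/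
def hurUnitMod2 (x : ℍ[ℚ]) : Prop :=
  x ∈ Hur ∧ ∃ β ∈ Hur, (∃ w ∈ Hur, x * β - 1 = 2 * w) ∧ (∃ w ∈ Hur, β * x - 1 = 2 * w)

/-! ### basic coordinate lemmas -/

def Qf (a b c d : ℤ) : ℤ := a^2+b^2+c^2+d^2+a*d+b*d+c*d

@[simp] lemma hurElt_re (a b c d : ℤ) : (hurElt a b c d).re = (a:ℚ) + (d:ℚ)/2 := rfl
@[simp] lemma hurElt_imI (a b c d : ℤ) : (hurElt a b c d).imI = (b:ℚ) + (d:ℚ)/2 := rfl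
@[simp] lemma hurElt_imJ (a b c d : ℤ) : (hurElt a b c d).imJ = (c:ℚ) + (d:ℚ)/2 := rfl
@[simp] lemma hurElt_imK (a b c d : ℤ) : (hurElt a b c d).imK = (d:ℚ)/2 := rfl

lemma hurElt_inj {a b c d a' b' c' d' : ℤ} (h : hurElt a b c d = hurElt a' b' c' d') :
    a = a' ∧ b = b' ∧ c = c' ∧ d = d' := by
  have h1 := congrArg QuaternionAlgebra.re h
  have h2 := congrArg QuaternionAlgebra.imI h
  have h3 := congrArg QuaternionAlgebra.imJ h
  have h4 := congrArg QuaternionAlgebra.imK h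
  simp only [hurElt_re, hurElt_imI, hurElt_imJ, hurElt_imK] at h1 h2 h3 h4
  have hd : (d:ℚ) = d' := by linarith
  have ha : (a:ℚ) = a' := by linarith
  have hb : (b:ℚ) = b' := by linarith
  have hc : (c:ℚ) = c' := by linarith
  exact ⟨by exact_mod_cast ha, by exact_mod_cast hb, by exact_mod_cast hc, by exact_mod_cast hd⟩

lemma hurElt_sub (a b c d a' b' c' d' : ℤ) :
    hurElt a b c d - hurElt a' b' c' d' = hurElt (a-a') (b-b') (c-c') (d-d') := by
  ext <;> simp <;> push_cast <;> ring

lemma hurElt_add (a b c d a' b' c' d' : ℤ) :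
    hurElt a b c d + hurElt a' b' c' d' = hurElt (a+a') (b+b') (c+c') (d+d') := by
  ext <;> simp <;> push_cast <;> ring

@[simp] lemma two_re' : (2 : ℍ[ℚ]).re = 2 := rfl
@[simp] lemma two_imI' : (2 : ℍ[ℚ]).imI = 0 := rfl
@[simp] lemma two_imJ' : (2 : ℍ[ℚ]).imJ = 0 := rfl
@[simp] lemma two_imK' : (2 : ℍ[ℚ]).imK = 0 := rfl

lemma two_mul_hurElt (a b c d : ℤ) :
    (2 : ℍ[ℚ]) * hurElt a b c d = hurElt (2*a) (2*b) (2*c) (2*d) := by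
  ext <;> simp [Quaternion.re_mul, Quaternion.imI_mul, Quaternion.imJ_mul,
    Quaternion.imK_mul] <;> push_cast <;> ring

lemma hurElt_neg (a b c d : ℤ) : -hurElt a b c d = hurElt (-a) (-b) (-c) (-d) := by
  ext <;> simp <;> push_cast <;> ring

lemma star_hurElt (a b c d : ℤ) :
    star (hurElt a b c d) = hurElt (a+d) (-b) (-c) (-d) := by
  ext <;> simp [Quaternion.re_star, Quaternion.imI_star, Quaternion.imJ_star,
    Quaternion.imK_star] <;> push_cast <;> ring

lemma normSq_hurElt (a b c d : ℤ) :
    Quaternion.normSq (hurElt a b c d) = (Qf a b c d : ℚ) := by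
  rw [Quaternion.normSq_def']
  simp only [hurElt_re, hurElt_imI, hurElt_imJ, hurElt_imK, Qf]; push_cast; ring

lemma one_eq_hurElt : (1 : ℍ[ℚ]) = hurElt 1 0 0 0 := by
  ext <;> simp [hurElt]

lemma hurElt_mem (a b c d : ℤ) : hurElt a b c d ∈ Hur := ⟨a, b, c, d, rfl⟩

/-! ### units and norm -/

lemma unit_of_Qf_one {a b c d : ℤ} (h : Qf a b c d = 1) : hurUnit (hurElt a b c d) := by
  refine ⟨hurElt_mem a b c d, star (hurElt a b c d),
    by rw [star_hurElt]; exact hurElt_mem _ _ _ _, ?_, ?_⟩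
  · rw [Quaternion.self_mul_star, normSq_hurElt, h]; norm_num
  · rw [Quaternion.star_mul_self, normSq_hurElt, h]; norm_num

lemma Qf_one_of_unit {a b c d : ℤ} (h : hurUnit (hurElt a b c d)) : Qf a b c d = 1 := by
  obtain ⟨-, y, ⟨a', b', c', d', rfl⟩, hxy, -⟩ := h
  have := congrArg Quaternion.normSq hxy
  rw [map_mul, normSq_hurElt, normSq_hurElt, map_one] at this
  have h2 : Qf a b c d * Qf a' b' c' d' = 1 := by exact_mod_cast this
  have h3 : 0 ≤ 4 * Qf a b c d := by
    have : 4 * Qf a b c d = (2*a+d)^2 + (2*b+d)^2 + (2*c+d)^2 + d^2 := by unfold Qf; ring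
    rw [this]; positivity
  rcases Int.eq_one_or_neg_one_of_mul_eq_one' h2 with ⟨h, -⟩ | ⟨h, -⟩ <;> omega

/-! ### congruence mod 2 -/

lemma cong_iff_parity {a b c d a' b' c' d' : ℤ} :
    (∃ w ∈ Hur, hurElt a b c d - hurElt a' b' c' d' = 2 * w) ↔
      (a % 2 = a' % 2 ∧ b % 2 = b' % 2 ∧ c % 2 = c' % 2 ∧ d % 2 = d' % 2) := by
  constructor
  · rintro ⟨w, ⟨p, q, r, s, rfl⟩, hw⟩
    rw [hurElt_sub, two_mul_hurElt] at hw
    obtain ⟨h1, h2, h3, h4⟩ := hurElt_inj hw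
    omega
  · rintro ⟨h1, h2, h3, h4⟩
    refine ⟨hurElt ((a-a')/2) ((b-b')/2) ((c-c')/2) ((d-d')/2), hurElt_mem _ _ _ _, ?_⟩
    rw [hurElt_sub, two_mul_hurElt]
    congr 1 <;> omega

lemma Qf_odd_of_mod2unit {a b c d : ℤ} (h : hurUnitMod2 (hurElt a b c d)) :
    Qf a b c d % 2 = 1 := by
  obtain ⟨-, β, ⟨a', b', c', d', rfl⟩, ⟨w, ⟨p, q, r, s, rfl⟩, hw⟩, -⟩ := h
  have hmul : hurElt a b c d * hurElt a' b' c' d' = hurElt (2*p+1) (2*q) (2*r) (2*s) := by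
    have h0 : hurElt a b c d * hurElt a' b' c' d' = 2 * hurElt p q r s + 1 :=
      sub_eq_iff_eq_add.mp hw
    rw [h0, two_mul_hurElt, one_eq_hurElt, hurElt_add]
    norm_num
  have := congrArg Quaternion.normSq hmul
  rw [map_mul, normSq_hurElt, normSq_hurElt, normSq_hurElt] at this
  have h2 : Qf a b c d * Qf a' b' c' d' = Qf (2*p+1) (2*q) (2*r) (2*s) := by exact_mod_cast this
  have h3 : Qf (2*p+1) (2*q) (2*r) (2*s) % 2 = 1 := by
    have he : Qf (2*p+1) (2*q) (2*r) (2*s) =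
        2*(2*p^2+2*p+2*q^2+2*r^2+2*s^2+2*p*s+s+2*q*s+2*r*s) + 1 := by unfold Qf; ring
    omega
  have h5 := Int.mul_emod (Qf a b c d) (Qf a' b' c' d') 2
  rw [h2] at h5
  rcases Int.emod_two_eq (Qf a b c d) with h4 | h4
  · rw [h4] at h5; simp at h5; omega
  · exact h4

lemma mod2unit_of_Qf_odd {a b c d : ℤ} (h : Qf a b c d % 2 = 1) :
    hurUnitMod2 (hurElt a b c d) := by
  refine ⟨hurElt_mem a b c d, star (hurElt a b c d),
    by rw [star_hurElt]; exact hurElt_mem _ _ _ _, ?_, ?_⟩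
  · refine ⟨hurElt ((Qf a b c d - 1)/2) 0 0 0, hurElt_mem _ _ _ _, ?_⟩
    rw [Quaternion.self_mul_star, normSq_hurElt, two_mul_hurElt,
      show 2*((Qf a b c d - 1)/2) = Qf a b c d - 1 by omega]
    ext <;> simp [hurElt] <;> push_cast <;> ring
  · refine ⟨hurElt ((Qf a b c d - 1)/2) 0 0 0, hurElt_mem _ _ _ _, ?_⟩
    rw [Quaternion.star_mul_self, normSq_hurElt, two_mul_hurElt,
      show 2*((Qf a b c d - 1)/2) = Qf a b c d - 1 by omega]
    ext <;> simp [hurElt] <;> push_cast <;> ring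

/-! ### classification of the 24 units -/

lemma four_sq_enum : ∀ a ∈ Finset.Icc (-2:ℤ) 2, ∀ b ∈ Finset.Icc (-2:ℤ) 2,
    ∀ c ∈ Finset.Icc (-2:ℤ) 2, ∀ d ∈ Finset.Icc (-2:ℤ) 2,
    (2*a+d)*(2*a+d) + (2*b+d)*(2*b+d) + (2*c+d)*(2*c+d) + d*d = 4 →
    ((a=1∧b=0∧c=0∧d=0) ∨ (a=-1∧b=0∧c=0∧d=0) ∨ (a=0∧b=1∧c=0∧d=0) ∨ (a=0∧b=-1∧c=0∧d=0) ∨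
    (a=0∧b=0∧c=1∧d=0) ∨ (a=0∧b=0∧c=-1∧d=0) ∨ (a=-1∧b=-1∧c=-1∧d=2) ∨ (a=1∧b=1∧c=1∧d=-2) ∨
    (a=0∧b=0∧c=0∧d=1) ∨ (a=-1∧b=0∧c=0∧d=1) ∨ (a=0∧b=-1∧c=0∧d=1) ∨ (a=0∧b=0∧c=-1∧d=1) ∨
    (a=-1∧b=-1∧c=0∧d=1) ∨ (a=-1∧b=0∧c=-1∧d=1) ∨ (a=0∧b=-1∧c=-1∧d=1) ∨ (a=-1∧b=-1∧c=-1∧d=1) ∨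
    (a=0∧b=0∧c=0∧d=-1) ∨ (a=1∧b=0∧c=0∧d=-1) ∨ (a=0∧b=1∧c=0∧d=-1) ∨ (a=0∧b=0∧c=1∧d=-1) ∨
    (a=1∧b=1∧c=0∧d=-1) ∨ (a=1∧b=0∧c=1∧d=-1) ∨ (a=0∧b=1∧c=1∧d=-1) ∨ (a=1∧b=1∧c=1∧d=-1)) := by
  decide

lemma Qf_classify {a b c d : ℤ} (h : Qf a b c d = 1) :
    (a=1∧b=0∧c=0∧d=0) ∨ (a=-1∧b=0∧c=0∧d=0) ∨ (a=0∧b=1∧c=0∧d=0) ∨ (a=0∧b=-1∧c=0∧d=0) ∨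
    (a=0∧b=0∧c=1∧d=0) ∨ (a=0∧b=0∧c=-1∧d=0) ∨ (a=-1∧b=-1∧c=-1∧d=2) ∨ (a=1∧b=1∧c=1∧d=-2) ∨
    (a=0∧b=0∧c=0∧d=1) ∨ (a=-1∧b=0∧c=0∧d=1) ∨ (a=0∧b=-1∧c=0∧d=1) ∨ (a=0∧b=0∧c=-1∧d=1) ∨
    (a=-1∧b=-1∧c=0∧d=1) ∨ (a=-1∧b=0∧c=-1∧d=1) ∨ (a=0∧b=-1∧c=-1∧d=1) ∨ (a=-1∧b=-1∧c=-1∧d=1) ∨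
    (a=0∧b=0∧c=0∧d=-1) ∨ (a=1∧b=0∧c=0∧d=-1) ∨ (a=0∧b=1∧c=0∧d=-1) ∨ (a=0∧b=0∧c=1∧d=-1) ∨
    (a=1∧b=1∧c=0∧d=-1) ∨ (a=1∧b=0∧c=1∧d=-1) ∨ (a=0∧b=1∧c=1∧d=-1) ∨ (a=1∧b=1∧c=1∧d=-1) := by
  have e : (2*a+d)*(2*a+d) + (2*b+d)*(2*b+d) + (2*c+d)*(2*c+d) + d*d = 4 := by
    unfold Qf at h; nlinarith [h]
  have hd : -2 ≤ d ∧ d ≤ 2 := by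
    constructor <;> nlinarith [sq_nonneg (2*a+d), sq_nonneg (2*b+d), sq_nonneg (2*c+d)]
  have ha : -2 ≤ a ∧ a ≤ 2 := by
    have h2 : -2 ≤ 2*a+d ∧ 2*a+d ≤ 2 := by
      constructor <;> nlinarith [sq_nonneg (2*b+d), sq_nonneg (2*c+d), sq_nonneg d,
        sq_nonneg (2*a+d-2), sq_nonneg (2*a+d+2)]
    omega
  have hb : -2 ≤ b ∧ b ≤ 2 := by
    have h2 : -2 ≤ 2*b+d ∧ 2*b+d ≤ 2 := by
      constructor <;> nlinarith [sq_nonneg (2*a+d), sq_nonneg (2*c+d), sq_nonneg d,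
        sq_nonneg (2*b+d-2), sq_nonneg (2*b+d+2)]
    omega
  have hc : -2 ≤ c ∧ c ≤ 2 := by
    have h2 : -2 ≤ 2*c+d ∧ 2*c+d ≤ 2 := by
      constructor <;> nlinarith [sq_nonneg (2*a+d), sq_nonneg (2*b+d), sq_nonneg d,
        sq_nonneg (2*c+d-2), sq_nonneg (2*c+d+2)]
    omega
  exact four_sq_enum a (Finset.mem_Icc.mpr ⟨ha.1, ha.2⟩) b (Finset.mem_Icc.mpr ⟨hb.1, hb.2⟩)
    c (Finset.mem_Icc.mpr ⟨hc.1, hc.2⟩) d (Finset.mem_Icc.mpr ⟨hd.1, hd.2⟩) e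

/-! ### uniqueness up to sign -/

lemma odd_sq_ge_one (t : ℤ) : 1 ≤ (2*t+1)*(2*t+1) := by
  rcases le_or_gt 0 t with h | h <;> nlinarith

lemma close_units {a b c d p q r s : ℤ} (h1 : Qf a b c d = 1)
    (h2 : Qf (a+2*p) (b+2*q) (c+2*r) (d+2*s) = 1) :
    (p = 0 ∧ q = 0 ∧ r = 0 ∧ s = 0) ∨ (a + p = 0 ∧ b + q = 0 ∧ c + r = 0 ∧ d + s = 0) := by
  unfold Qf at h1 h2
  have e1 : (2*a+d)*(2*a+d) + (2*b+d)*(2*b+d) + (2*c+d)*(2*c+d) + d*d = 4 := by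
    linear_combination 4*h1
  have e2 : (2*a+d+2*(2*p+s))*(2*a+d+2*(2*p+s)) + (2*b+d+2*(2*q+s))*(2*b+d+2*(2*q+s))
      + (2*c+d+2*(2*r+s))*(2*c+d+2*(2*r+s)) + (d+2*s)*(d+2*s) = 4 := by
    linear_combination 4*h2
  set A := 2*a+d with hA
  set B := 2*b+d with hB
  set C := 2*c+d with hC
  set P := 2*p+s with hP
  set Q := 2*q+s with hQ
  set R := 2*r+s with hR
  have h3four : 4*(A*P+B*Q+C*R+d*s) + 4*(P*P+Q*Q+R*R+s*s) = 0 := by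
    linear_combination e2 - e1
  have h3 : A*P+B*Q+C*R+d*s + (P*P+Q*Q+R*R+s*s) = 0 := by linarith
  have h4 : (A+P)*(A+P)+(B+Q)*(B+Q)+(C+R)*(C+R)+(d+s)*(d+s) = 4 - (P*P+Q*Q+R*R+s*s) := by
    linear_combination e1 + 2*h3
  obtain ⟨SS, hSS⟩ : ∃ t, P*P+Q*Q+R*R+s*s = t := ⟨_, rfl⟩
  have hSS0 : 0 ≤ SS := by
    rw [← hSS]
    have := mul_self_nonneg P; have := mul_self_nonneg Q
    have := mul_self_nonneg R; have := mul_self_nonneg s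
    linarith
  rw [hSS] at h4
  have hsum0 : SS = 0 → (p = 0 ∧ q = 0 ∧ r = 0 ∧ s = 0) := by
    intro h0
    rw [h0] at hSS
    have hp1 : P*P = 0 := by
      have := mul_self_nonneg P; have := mul_self_nonneg Q
      have := mul_self_nonneg R; have := mul_self_nonneg s
      linarith
    have hq1 : Q*Q = 0 := by
      have := mul_self_nonneg P; have := mul_self_nonneg Q
      have := mul_self_nonneg R; have := mul_self_nonneg s
      linarith
    have hr1 : R*R = 0 := by
      have := mul_self_nonneg P; have := mul_self_nonneg Q
      have := mul_self_nonneg R; have := mul_self_nonneg s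
      linarith
    have hs1 : s*s = 0 := by
      have := mul_self_nonneg P; have := mul_self_nonneg Q
      have := mul_self_nonneg R; have := mul_self_nonneg s
      linarith
    have hp0 := mul_self_eq_zero.mp hp1
    have hq0 := mul_self_eq_zero.mp hq1
    have hr0 := mul_self_eq_zero.mp hr1
    have hs0 := mul_self_eq_zero.mp hs1
    rw [hP] at hp0; rw [hQ] at hq0; rw [hR] at hr0
    omega
  rcases Int.even_or_odd (d + s) with ⟨m, hm⟩ | ⟨m, hm⟩
  · -- all of A+P, B+Q, C+R, d+s even
    have hk1 : A + P - 2*(a+p+m) = 0 := by rw [hA, hP]; omega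
    have hk2 : B + Q - 2*(b+q+m) = 0 := by rw [hB, hQ]; omega
    have hk3 : C + R - 2*(c+r+m) = 0 := by rw [hC, hR]; omega
    have hkm : d + s - 2*m = 0 := by omega
    have h5 : 4*((a+p+m)*(a+p+m) + (b+q+m)*(b+q+m) + (c+r+m)*(c+r+m) + m*m) = 4 - SS := by
      linear_combination h4 - (A+P+2*(a+p+m))*hk1 - (B+Q+2*(b+q+m))*hk2
        - (C+R+2*(c+r+m))*hk3 - (d+s+2*m)*hkm
    obtain ⟨KK, hKK⟩ : ∃ t, (a+p+m)*(a+p+m) + (b+q+m)*(b+q+m) + (c+r+m)*(c+r+m) + m*m = t :=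
      ⟨_, rfl⟩
    have hKK0 : 0 ≤ KK := by
      rw [← hKK]
      have := mul_self_nonneg (a+p+m); have := mul_self_nonneg (b+q+m)
      have := mul_self_nonneg (c+r+m); have := mul_self_nonneg m
      linarith
    rw [hKK] at h5
    have : KK = 0 ∨ KK = 1 := by omega
    rcases this with hK | hK
    · right
      rw [hK] at hKK
      have a1 : (a+p+m)*(a+p+m) = 0 := by
        have := mul_self_nonneg (a+p+m); have := mul_self_nonneg (b+q+m)
        have := mul_self_nonneg (c+r+m); have := mul_self_nonneg m
        linarith
      have a2 : (b+q+m)*(b+q+m) = 0 := by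
        have := mul_self_nonneg (a+p+m); have := mul_self_nonneg (b+q+m)
        have := mul_self_nonneg (c+r+m); have := mul_self_nonneg m
        linarith
      have a3 : (c+r+m)*(c+r+m) = 0 := by
        have := mul_self_nonneg (a+p+m); have := mul_self_nonneg (b+q+m)
        have := mul_self_nonneg (c+r+m); have := mul_self_nonneg m
        linarith
      have a4 : m*m = 0 := by
        have := mul_self_nonneg (a+p+m); have := mul_self_nonneg (b+q+m)
        have := mul_self_nonneg (c+r+m); have := mul_self_nonneg m
        linarith
      have b1 := mul_self_eq_zero.mp a1
      have b2 := mul_self_eq_zero.mp a2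
      have b3 := mul_self_eq_zero.mp a3
      have b4 := mul_self_eq_zero.mp a4
      omega
    · left
      exact hsum0 (by omega)
  · -- d+s odd
    have o1 : A + P = 2*(a+p+m)+1 := by rw [hA, hP]; omega
    have o2 : B + Q = 2*(b+q+m)+1 := by rw [hB, hQ]; omega
    have o3 : C + R = 2*(c+r+m)+1 := by rw [hC, hR]; omega
    have g1 := odd_sq_ge_one (a+p+m)
    have g2 := odd_sq_ge_one (b+q+m)
    have g3 := odd_sq_ge_one (c+r+m)
    have g4 := odd_sq_ge_one m
    rw [o1, o2, o3, hm] at h4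
    have : SS = 0 := by linarith
    exact Or.inl (hsum0 this)

/-! ### parity pattern machinery -/

abbrev P4 := Bool × Bool × Bool × Bool

def podd (p : P4) : Bool := p.2.2.2 || (xor p.1 (xor p.2.1 p.2.2.1))

def pat (a b c d : ℤ) : P4 := (a % 2 == 1, b % 2 == 1, c % 2 == 1, d % 2 == 1)

def rT (p : P4) : ℤ × ℤ × ℤ × ℤ :=
  if p.2.2.2 then (if p.1 then -1 else 0, if p.2.1 then -1 else 0, if p.2.2.1 then -1 else 0, 1)
  else if p.1 && p.2.1 && p.2.2.1 then (-1,-1,-1,2)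
  else (if p.1 then 1 else 0, if p.2.1 then 1 else 0, if p.2.2.1 then 1 else 0, 0)

lemma rT_Qf : ∀ p : P4, podd p = true →
    Qf (rT p).1 (rT p).2.1 (rT p).2.2.1 (rT p).2.2.2 = 1 := by decide

lemma rT_pat : ∀ p : P4, podd p = true →
    pat (rT p).1 (rT p).2.1 (rT p).2.2.1 (rT p).2.2.2 = p := by decide

lemma Qf_mod2 (a b c d : ℤ) : Qf a b c d % 2 = Qf (a%2) (b%2) (c%2) (d%2) % 2 := by
  have ha : a ≡ a % 2 [ZMOD 2] := by unfold Int.ModEq; omega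
  have hb : b ≡ b % 2 [ZMOD 2] := by unfold Int.ModEq; omega
  have hc : c ≡ c % 2 [ZMOD 2] := by unfold Int.ModEq; omega
  have hd : d ≡ d % 2 [ZMOD 2] := by unfold Int.ModEq; omega
  have : Qf a b c d ≡ Qf (a%2) (b%2) (c%2) (d%2) [ZMOD 2] := by
    unfold Qf
    exact ((((((ha.pow 2).add (hb.pow 2)).add (hc.pow 2)).add (hd.pow 2)).add
      (ha.mul hd)).add (hb.mul hd)).add (hc.mul hd)
  exact this

lemma podd_of_Qf_odd {a b c d : ℤ} (h : Qf a b c d % 2 = 1) : podd (pat a b c d) = true := by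
  rw [Qf_mod2] at h
  have ha : a % 2 = 0 ∨ a % 2 = 1 := by omega
  have hb : b % 2 = 0 ∨ b % 2 = 1 := by omega
  have hc : c % 2 = 0 ∨ c % 2 = 1 := by omega
  have hd : d % 2 = 0 ∨ d % 2 = 1 := by omega
  unfold pat
  rcases ha with ha | ha <;> rcases hb with hb | hb <;> rcases hc with hc | hc <;>
    rcases hd with hd | hd <;> rw [ha, hb, hc, hd] at h ⊢ <;> revert h <;> decide

lemma Qf_odd_of_podd {a b c d : ℤ} (h : podd (pat a b c d) = true) : Qf a b c d % 2 = 1 := by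
  rw [Qf_mod2]
  have ha : a % 2 = 0 ∨ a % 2 = 1 := by omega
  have hb : b % 2 = 0 ∨ b % 2 = 1 := by omega
  have hc : c % 2 = 0 ∨ c % 2 = 1 := by omega
  have hd : d % 2 = 0 ∨ d % 2 = 1 := by omega
  unfold pat at h
  rcases ha with ha | ha <;> rcases hb with hb | hb <;> rcases hc with hc | hc <;>
    rcases hd with hd | hd <;> rw [ha, hb, hc, hd] at h ⊢ <;> revert h <;> decide

/-! ### the parity map on quaternions -/

def gmap (x : ℍ[ℚ]) : P4 :=
  ((x.re - x.imK).num % 2 == 1, (x.imI - x.imK).num % 2 == 1,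
   (x.imJ - x.imK).num % 2 == 1, (2 * x.imK).num % 2 == 1)

lemma gmap_hurElt (a b c d : ℤ) : gmap (hurElt a b c d) = pat a b c d := by
  unfold gmap pat
  have h1 : (hurElt a b c d).re - (hurElt a b c d).imK = (a:ℚ) := by simp
  have h2 : (hurElt a b c d).imI - (hurElt a b c d).imK = (b:ℚ) := by simp
  have h3 : (hurElt a b c d).imJ - (hurElt a b c d).imK = (c:ℚ) := by simp
  have h4 : (2:ℚ) * (hurElt a b c d).imK = (d:ℚ) := by rw [hurElt_imK]; ring
  rw [h1, h2, h3, h4, Rat.num_intCast, Rat.num_intCast, Rat.num_intCast, Rat.num_intCast]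

lemma pat_eq_iff {a b c d a' b' c' d' : ℤ} :
    pat a b c d = pat a' b' c' d' ↔
      (a % 2 = a' % 2 ∧ b % 2 = b' % 2 ∧ c % 2 = c' % 2 ∧ d % 2 = d' % 2) := by
  unfold pat
  simp only [Prod.mk.injEq, beq_eq_beq]
  omega

lemma pat_neg (a b c d : ℤ) : pat (-a) (-b) (-c) (-d) = pat a b c d :=
  pat_eq_iff.mpr (by omega)

noncomputable def repQ (p : P4) : ℍ[ℚ] := hurElt (rT p).1 (rT p).2.1 (rT p).2.2.1 (rT p).2.2.2

lemma gmap_repQ (p : P4) (hp : podd p = true) : gmap (repQ p) = p := by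
  unfold repQ; rw [gmap_hurElt]; exact rT_pat p hp

lemma repQ_unit (p : P4) (hp : podd p = true) : hurUnit (repQ p) :=
  unit_of_Qf_one (rT_Qf p hp)

lemma gmap_podd_of_unit {x : ℍ[ℚ]} (h : hurUnit x) : podd (gmap x) = true := by
  obtain ⟨a, b, c, d, rfl⟩ := h.1
  rw [gmap_hurElt]
  exact podd_of_Qf_odd (by rw [Qf_one_of_unit h]; omega)

lemma gmap_podd_of_mod2 {x : ℍ[ℚ]} (h : hurUnitMod2 x) : podd (gmap x) = true := by
  obtain ⟨a, b, c, d, rfl⟩ := h.1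
  rw [gmap_hurElt]
  exact podd_of_Qf_odd (Qf_odd_of_mod2unit h)

lemma gmap_R {x y : ℍ[ℚ]} (hy : y ∈ Hur) (h : x = y ∨ x = -y) : gmap x = gmap y := by
  obtain ⟨a, b, c, d, rfl⟩ := hy
  rcases h with rfl | rfl
  · rfl
  · rw [hurElt_neg, gmap_hurElt, gmap_hurElt, pat_neg]

lemma gmap_S {x y : ℍ[ℚ]} (hx : x ∈ Hur) (hy : y ∈ Hur) (h : ∃ w ∈ Hur, x - y = 2 * w) :
    gmap x = gmap y := by
  obtain ⟨a, b, c, d, rfl⟩ := hx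
  obtain ⟨a', b', c', d', rfl⟩ := hy
  rw [gmap_hurElt, gmap_hurElt]
  exact pat_eq_iff.mpr (cong_iff_parity.mp h)

lemma rep_pm {a b c d : ℤ} (h : Qf a b c d = 1) :
    (rT (pat a b c d) = (a, b, c, d)) ∨ (rT (pat a b c d) = (-a, -b, -c, -d)) := by
  rcases Qf_classify h with
    ⟨rfl,rfl,rfl,rfl⟩|⟨rfl,rfl,rfl,rfl⟩|⟨rfl,rfl,rfl,rfl⟩|⟨rfl,rfl,rfl,rfl⟩|
    ⟨rfl,rfl,rfl,rfl⟩|⟨rfl,rfl,rfl,rfl⟩|⟨rfl,rfl,rfl,rfl⟩|⟨rfl,rfl,rfl,rfl⟩|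
    ⟨rfl,rfl,rfl,rfl⟩|⟨rfl,rfl,rfl,rfl⟩|⟨rfl,rfl,rfl,rfl⟩|⟨rfl,rfl,rfl,rfl⟩|
    ⟨rfl,rfl,rfl,rfl⟩|⟨rfl,rfl,rfl,rfl⟩|⟨rfl,rfl,rfl,rfl⟩|⟨rfl,rfl,rfl,rfl⟩|
    ⟨rfl,rfl,rfl,rfl⟩|⟨rfl,rfl,rfl,rfl⟩|⟨rfl,rfl,rfl,rfl⟩|⟨rfl,rfl,rfl,rfl⟩|
    ⟨rfl,rfl,rfl,rfl⟩|⟨rfl,rfl,rfl,rfl⟩|⟨rfl,rfl,rfl,rfl⟩|⟨rfl,rfl,rfl,rfl⟩ <;> decide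

lemma repQ_gmap_unit {x : ℍ[ℚ]} (h : hurUnit x) : repQ (gmap x) = x ∨ repQ (gmap x) = -x := by
  obtain ⟨a, b, c, d, rfl⟩ := h.1
  have hq := Qf_one_of_unit h
  rw [gmap_hurElt]
  rcases rep_pm hq with h' | h'
  · left; unfold repQ; rw [h']
  · right; unfold repQ; rw [h', hurElt_neg]

lemma repQ_cong {x : ℍ[ℚ]} (h : hurUnitMod2 x) : ∃ w ∈ Hur, repQ (gmap x) - x = 2 * w := by
  obtain ⟨a, b, c, d, rfl⟩ := h.1
  have hpodd := podd_of_Qf_odd (Qf_odd_of_mod2unit h)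
  rw [gmap_hurElt]
  unfold repQ
  exact cong_iff_parity.mpr (pat_eq_iff.mp (rT_pat (pat a b c d) hpodd))

lemma card_V : Nat.card {p : P4 // podd p = true} = 12 := by
  rw [Nat.card_eq_fintype_card]; decide

/-! ### the main theorem -/

/-- `O^×/{±1}` has order 12 for the Hurwitz order `O`, and reduction mod `2O`
is a bijection from `O^×/{±1}` onto `(O/2O)^×`: every class of `O/2O` invertible mod `2O`
contains a unit of `O`, unique up to sign; in particular `(O/2O)^×` (the quotient of the
invertible-mod-`2O` elements by congruence mod `2O`) also has order 12. -/
theorem stmt_17 :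
    Nat.card (Quot (fun (u v : {x : ℍ[ℚ] // hurUnit x}) =>
        (u : ℍ[ℚ]) = (v : ℍ[ℚ]) ∨ (u : ℍ[ℚ]) = -(v : ℍ[ℚ]))) = 12 ∧
    (∀ α ∈ Hur, hurUnitMod2 α →
      ∃ u : ℍ[ℚ], hurUnit u ∧ (∃ w ∈ Hur, α - u = 2 * w) ∧
        ∀ u' : ℍ[ℚ], hurUnit u' → (∃ w ∈ Hur, α - u' = 2 * w) → u' = u ∨ u' = -u) ∧
    Nat.card (Quot (fun (x y : {x : ℍ[ℚ] // hurUnitMod2 x}) =>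
        ∃ w ∈ Hur, (x : ℍ[ℚ]) - (y : ℍ[ℚ]) = 2 * w)) = 12 := by
  refine ⟨?_, ?_, ?_⟩
  · -- part 1
    have e : Quot (fun (u v : {x : ℍ[ℚ] // hurUnit x}) =>
        (u : ℍ[ℚ]) = (v : ℍ[ℚ]) ∨ (u : ℍ[ℚ]) = -(v : ℍ[ℚ])) ≃ {p : P4 // podd p = true} :=
      { toFun := Quot.lift (fun u => ⟨gmap u.1, gmap_podd_of_unit u.2⟩)
          (fun u v huv => Subtype.ext (gmap_R v.2.1 huv))
        invFun := fun p => Quot.mk _ ⟨repQ p.1, repQ_unit p.1 p.2⟩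
        left_inv := by
          apply Quot.ind
          intro u
          exact Quot.sound (repQ_gmap_unit u.2)
        right_inv := fun p => Subtype.ext (gmap_repQ p.1 p.2) }
    rw [Nat.card_congr e, card_V]
  · -- part 2
    rintro α ⟨a, b, c, d, rfl⟩ hm
    have hodd := Qf_odd_of_mod2unit hm
    have hpodd := podd_of_Qf_odd hodd
    refine ⟨repQ (pat a b c d), repQ_unit _ hpodd, ?_, ?_⟩
    · unfold repQ
      refine cong_iff_parity.mpr ?_
      have := pat_eq_iff.mp (rT_pat (pat a b c d) hpodd)
      omega
    · intro u' hu' hcong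
      obtain ⟨a', b', c', d', rfl⟩ := hu'.1
      have h1' := Qf_one_of_unit hu'
      have hrepQf : Qf (rT (pat a b c d)).1 (rT (pat a b c d)).2.1
          (rT (pat a b c d)).2.2.1 (rT (pat a b c d)).2.2.2 = 1 := rT_Qf _ hpodd
      have hpar1 := cong_iff_parity.mp hcong
      have hpar2 := pat_eq_iff.mp (rT_pat (pat a b c d) hpodd)
      -- parities of (a',b',c',d') agree with those of rT (pat a b c d)
      obtain ⟨p, hp⟩ : ∃ p, a' = (rT (pat a b c d)).1 + 2*p :=
        ⟨(a' - (rT (pat a b c d)).1)/2, by omega⟩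
      obtain ⟨q, hq⟩ : ∃ q, b' = (rT (pat a b c d)).2.1 + 2*q :=
        ⟨(b' - (rT (pat a b c d)).2.1)/2, by omega⟩
      obtain ⟨r, hr⟩ : ∃ r, c' = (rT (pat a b c d)).2.2.1 + 2*r :=
        ⟨(c' - (rT (pat a b c d)).2.2.1)/2, by omega⟩
      obtain ⟨t, ht⟩ : ∃ t, d' = (rT (pat a b c d)).2.2.2 + 2*t :=
        ⟨(d' - (rT (pat a b c d)).2.2.2)/2, by omega⟩
      rw [hp, hq, hr, ht] at h1'
      rcases close_units hrepQf h1' with ⟨h1, h2, h3, h4⟩ | ⟨h1, h2, h3, h4⟩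
      · left
        unfold repQ
        congr 1 <;> omega
      · right
        unfold repQ
        rw [hurElt_neg]
        congr 1 <;> omega
  · -- part 3
    have e : Quot (fun (x y : {x : ℍ[ℚ] // hurUnitMod2 x}) =>
        ∃ w ∈ Hur, (x : ℍ[ℚ]) - (y : ℍ[ℚ]) = 2 * w) ≃ {p : P4 // podd p = true} :=
      { toFun := Quot.lift (fun x => ⟨gmap x.1, gmap_podd_of_mod2 x.2⟩)
          (fun x y hxy => Subtype.ext (gmap_S x.2.1 y.2.1 hxy))
        invFun := fun p => Quot.mk _ ⟨repQ p.1, mod2unit_of_Qf_odd (by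
          have := rT_Qf p.1 p.2; omega)⟩
        left_inv := by
          apply Quot.ind
          intro x
          exact Quot.sound (repQ_cong x.2)
        right_inv := fun p => Subtype.ext (gmap_repQ p.1 p.2) }
    rw [Nat.card_congr e, card_V]
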